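/- Assume h21 ≥ (b+b')·h22. Then the supremum of h22·w2 over all (w1,w2) with 0 < w1 ≤ W1, 0 < w2 ≤ W2, h22·w2 ≤ b'·h11·w1 − a'·h21·w2, and (b+b')·h11·w1 ≤ (a+a')·h21·w2, equals min{ b'·h11·h22·W1/(a'·h21 + h22) , h22·W2 }, and the supremum is attained. (If instead h21 < (b+b')·h22, the feasible set is empty.) -/

import Mathlib

/-- Case 2 of Sub-problem 1: if `h21 ≥ (b+b')·h22` then the supremum of
`h22·w2` over the constrained set equals
`min{ b'·h11·h22·W1/(a'·h21 + h22) , h22·W2 }` and is attained;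
if `h21 < (b+b')·h22` the feasible set is empty. -/
theorem subproblem1_case2 (a b a2 b2 : ℕ) (ha : 1 ≤ a) (hb2 : 1 ≤ b2)
    (huni : (a : ℤ) * b2 - (a2 : ℤ) * b = 1)
    (h11 h21 h22 W1 W2 : ℝ)
    (h11p : 0 < h11) (h21p : 0 < h21) (h22p : 0 < h22)
    (hW1 : 0 < W1) (hW2 : 0 < W2) :
    (((b : ℝ) + b2) * h22 ≤ h21 →
      IsGreatest {v : ℝ | ∃ w1 w2 : ℝ, 0 < w1 ∧ w1 ≤ W1 ∧ 0 < w2 ∧ w2 ≤ W2 ∧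
          h22 * w2 ≤ (b2 : ℝ) * h11 * w1 - (a2 : ℝ) * h21 * w2 ∧
          ((b : ℝ) + b2) * h11 * w1 ≤ ((a : ℝ) + a2) * h21 * w2 ∧
          v = h22 * w2}
        (min ((b2 : ℝ) * h11 * h22 * W1 / ((a2 : ℝ) * h21 + h22)) (h22 * W2))) ∧
    (h21 < ((b : ℝ) + b2) * h22 →
      {v : ℝ | ∃ w1 w2 : ℝ, 0 < w1 ∧ w1 ≤ W1 ∧ 0 < w2 ∧ w2 ≤ W2 ∧
          h22 * w2 ≤ (b2 : ℝ) * h11 * w1 - (a2 : ℝ) * h21 * w2 ∧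
          ((b : ℝ) + b2) * h11 * w1 ≤ ((a : ℝ) + a2) * h21 * w2 ∧
          v = h22 * w2} = ∅) := by
  have huniR : (a : ℝ) * b2 - (a2 : ℝ) * b = 1 := by exact_mod_cast huni
  have hb2R : (1 : ℝ) ≤ (b2 : ℝ) := by exact_mod_cast hb2
  have ha2R : (0 : ℝ) ≤ (a2 : ℝ) := Nat.cast_nonneg _
  have hbR : (0 : ℝ) ≤ (b : ℝ) := Nat.cast_nonneg _
  have hDpos : 0 < (a2 : ℝ) * h21 + h22 := by positivity
  constructor
  · intro hcase
    constructor
    · -- membership: construct witnesses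
      by_cases hmin : (b2 : ℝ) * h11 * h22 * W1 / ((a2 : ℝ) * h21 + h22) ≤ h22 * W2
      · rw [min_eq_left hmin]
        refine ⟨W1, (b2 : ℝ) * h11 * W1 / ((a2 : ℝ) * h21 + h22), hW1, le_refl _, by positivity, ?_, ?_, ?_, ?_⟩
        · rw [div_le_iff₀ hDpos] at hmin ⊢
          nlinarith
        · rw [← sub_nonneg]
          have heq : (b2 : ℝ) * h11 * W1 - (a2 : ℝ) * h21 * ((b2 : ℝ) * h11 * W1 / ((a2 : ℝ) * h21 + h22))
              - h22 * ((b2 : ℝ) * h11 * W1 / ((a2 : ℝ) * h21 + h22)) = 0 := by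
            field_simp
            ring
          linarith [heq]
        · rw [← sub_nonneg]
          have key : ((a : ℝ) + a2) * h21 * ((b2 : ℝ) * h11 * W1 / ((a2 : ℝ) * h21 + h22))
              - ((b : ℝ) + b2) * h11 * W1
              = (h21 - ((b : ℝ) + b2) * h22) * (h11 * W1) / ((a2 : ℝ) * h21 + h22) := by
            field_simp
            linear_combination h21 * huniR
          rw [key]
          exact div_nonneg (mul_nonneg (by linarith) (by positivity)) hDpos.le
        · rw [mul_div_assoc']
          ring_nf
      · push_neg at hmin
        rw [min_eq_right hmin.le]
        refine ⟨((a2 : ℝ) * h21 + h22) * W2 / ((b2 : ℝ) * h11), W2, by positivity, ?_, hW2, le_refl _, ?_, ?_, rfl⟩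
        · rw [div_le_iff₀ (by positivity)]
          rw [lt_div_iff₀ hDpos] at hmin
          nlinarith
        · rw [← sub_nonneg]
          have heq : (b2 : ℝ) * h11 * (((a2 : ℝ) * h21 + h22) * W2 / ((b2 : ℝ) * h11)) - (a2 : ℝ) * h21 * W2
              - h22 * W2 = 0 := by
            field_simp
            ring
          linarith [heq]
        · rw [← sub_nonneg]
          have key : ((a : ℝ) + a2) * h21 * W2
              - ((b : ℝ) + b2) * h11 * (((a2 : ℝ) * h21 + h22) * W2 / ((b2 : ℝ) * h11))
              = (h21 - ((b : ℝ) + b2) * h22) * W2 / (b2 : ℝ) := by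
            field_simp
            linear_combination h21 * huniR
          rw [key]
          exact div_nonneg (mul_nonneg (by linarith) hW2.le) (by positivity)
    · -- upper bound
      rintro v ⟨w1, w2, hw1p, hw1, hw2p, hw2, hc1, hc2, rfl⟩
      refine le_min ?_ (by nlinarith)
      rw [le_div_iff₀ hDpos]
      nlinarith [mul_le_mul_of_nonneg_left hw1 (by positivity : (0:ℝ) ≤ (b2:ℝ) * h11)]
  · intro hcase
    ext v
    simp only [Set.mem_setOf_eq, Set.mem_empty_iff_false, iff_false]
    rintro ⟨w1, w2, hw1p, hw1, hw2p, hw2, hc1, hc2, rfl⟩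
    have h1 : ((b : ℝ) + b2) * (((a2 : ℝ) * h21 + h22) * w2) ≤ ((b : ℝ) + b2) * ((b2 : ℝ) * h11 * w1) := by
      have : ((a2 : ℝ) * h21 + h22) * w2 ≤ (b2 : ℝ) * h11 * w1 := by linarith
      exact mul_le_mul_of_nonneg_left this (by positivity)
    have h2 : (b2 : ℝ) * (((b : ℝ) + b2) * h11 * w1) ≤ (b2 : ℝ) * (((a : ℝ) + a2) * h21 * w2) :=
      mul_le_mul_of_nonneg_left hc2 (by positivity)
    have h3 : ((b : ℝ) + b2) * ((a2 : ℝ) * h21 + h22) ≤ (b2 : ℝ) * (((a : ℝ) + a2) * h21) := by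
      have h5 : (((b : ℝ) + b2) * ((a2 : ℝ) * h21 + h22)) * w2 ≤ ((b2 : ℝ) * (((a : ℝ) + a2) * h21)) * w2 := by
        nlinarith
      exact le_of_mul_le_mul_right h5 hw2p
    have h4 : (((a : ℝ) * b2 - (a2 : ℝ) * b)) * h21 = h21 := by rw [huniR, one_mul]
    ring_nf at h3 h4 hcase
    linarith [h3, h4, hcase]
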